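/- For every real b ≥ 5 and every δ ∈ (0, 1/8], any real polynomial p satisfying sup_{x ∈ [0,b]} |e^{-x} - p(x)| ≤ δ must have degree at least (1/3)·√b. -/

import Mathlib

open Polynomial Set

namespace ExpPolyAux

/-- Closed form for Chebyshev T at a point, given `u+v = 2y`, `u*v = 1`. -/
lemma T_eval_closed (y u v : ℝ) (hsum : u + v = 2 * y) (hprod : u * v = 1) :
    ∀ n : ℕ, (Polynomial.Chebyshev.T ℝ n).eval y = (u ^ n + v ^ n) / 2 := by
  intro n
  induction n using Nat.twoStepInduction with
  | zero => simp [Polynomial.Chebyshev.T_zero]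
  | one => simp [Polynomial.Chebyshev.T_one]; linarith
  | more n ih2 ih1 =>
    have hcast : ((n + 2 : ℕ) : ℤ) = (n : ℤ) + 2 := by push_cast; ring
    rw [hcast, Polynomial.Chebyshev.T_add_two]
    have hcast1 : ((n : ℤ) + 1) = ((n + 1 : ℕ) : ℤ) := by push_cast; ring
    rw [hcast1]
    simp only [eval_sub, eval_mul, eval_ofNat, eval_X, ih1, ih2]
    linear_combination (- (u ^ (n+1) + v ^ (n+1)) / 2) * hsum + ((u ^ n + v ^ n) / 2) * hprod

lemma natDegree_T_le : ∀ n : ℕ, (Polynomial.Chebyshev.T ℝ n).natDegree ≤ n := by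
  intro n
  induction n using Nat.twoStepInduction with
  | zero => simp [Polynomial.Chebyshev.T_zero]
  | one => simp [Polynomial.Chebyshev.T_one]
  | more n ih2 ih1 =>
    have hcast : ((n + 2 : ℕ) : ℤ) = (n : ℤ) + 2 := by push_cast; ring
    rw [hcast, Polynomial.Chebyshev.T_add_two]
    have hcast1 : ((n : ℤ) + 1) = ((n + 1 : ℕ) : ℤ) := by push_cast; ring
    rw [hcast1]
    refine le_trans (natDegree_sub_le _ _) (max_le ?_ (le_trans ih2 (by omega)))
    have h2x : ((2 : ℝ[X]) * X).natDegree ≤ 1 := by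
      refine le_trans natDegree_mul_le ?_
      simp
    calc ((2 * X : ℝ[X]) * Polynomial.Chebyshev.T ℝ ((n+1 : ℕ) : ℤ)).natDegree
        ≤ (2 * X : ℝ[X]).natDegree + (Polynomial.Chebyshev.T ℝ ((n+1 : ℕ) : ℤ)).natDegree :=
          natDegree_mul_le
      _ ≤ 1 + (n + 1) := add_le_add h2x ih1
      _ ≤ n + 2 := by omega


lemma T_bounds {y : ℝ} (hy : 1 ≤ y) (n : ℕ) :
    1 ≤ (Polynomial.Chebyshev.T ℝ n).eval y ∧
      (Polynomial.Chebyshev.T ℝ n).eval y ≤ (y + Real.sqrt (y ^ 2 - 1)) ^ n := by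
  set w := Real.sqrt (y ^ 2 - 1) with hw
  have hy2 : (0:ℝ) ≤ y ^ 2 - 1 := by nlinarith
  have hw0 : 0 ≤ w := Real.sqrt_nonneg _
  have hwsq : w ^ 2 = y ^ 2 - 1 := Real.sq_sqrt hy2
  set u := y + w with hu
  set v := y - w with hv
  have hsum : u + v = 2 * y := by ring
  have hprod : u * v = 1 := by rw [hu, hv]; nlinarith
  have hT := T_eval_closed y u v hsum hprod n
  have hu1 : 1 ≤ u := by simp only [hu]; linarith
  have hupos : 0 < u := by linarith
  have hvpos : 0 < v := by nlinarith
  have hun : 1 ≤ u ^ n := one_le_pow₀ hu1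
  have hprodn : u ^ n * v ^ n = 1 := by rw [← mul_pow, hprod, one_pow]
  have hvn : 0 < v ^ n := pow_pos hvpos n
  constructor
  · rw [hT]
    nlinarith [sq_nonneg (u ^ n - 1)]
  · rw [hT]
    have : v ^ n ≤ u ^ n := by nlinarith
    linarith

lemma num_le_sqrt {b c : ℝ} (h : c ^ 2 ≤ b) (hc : 0 ≤ c) : c ≤ Real.sqrt b := by
  calc c = Real.sqrt (c ^ 2) := (Real.sqrt_sq hc).symm
    _ ≤ Real.sqrt b := Real.sqrt_le_sqrt h

lemma sqrt_lt_num {b c : ℝ} (hb : 0 ≤ b) (h : b < c ^ 2) (hc : 0 ≤ c) : Real.sqrt b < c := by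
  calc Real.sqrt b < Real.sqrt (c ^ 2) := Real.sqrt_lt_sqrt hb h
    _ = c := Real.sqrt_sq hc

lemma sqrt3_lb : (1.73:ℝ) ≤ Real.sqrt 3 := by
  have h := Real.sq_sqrt (by norm_num : (0:ℝ) ≤ 3)
  have h0 := Real.sqrt_nonneg (3:ℝ)
  nlinarith

lemma sqrt3_ub : Real.sqrt 3 ≤ 1.74 := by
  have h := Real.sq_sqrt (by norm_num : (0:ℝ) ≤ 3)
  have h0 := Real.sqrt_nonneg (3:ℝ)
  nlinarith

lemma exp_neg_three_le : Real.exp (-3:ℝ) ≤ 1/20 := by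
  rw [Real.exp_neg, inv_le_comm₀ (Real.exp_pos _) (by norm_num)]
  have h1 : Real.exp (3:ℝ) = Real.exp 1 ^ (3:ℕ) := by
    rw [Real.exp_one_pow]; norm_num
  have h2 : (2.7182818283:ℝ) ^ 3 ≤ Real.exp 1 ^ 3 :=
    pow_le_pow_left₀ (by norm_num) Real.exp_one_gt_d9.le 3
  have h3 : ((1:ℝ)/20)⁻¹ ≤ (2.7182818283:ℝ) ^ 3 := by norm_num
  rw [h1]
  linarith

lemma exp_three_half_le : Real.exp (3/2 : ℝ) ≤ 5 := by
  have hsq : Real.exp (3/2 : ℝ) * Real.exp (3/2 : ℝ) = Real.exp (3:ℝ) := by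
    rw [← Real.exp_add]; norm_num
  have h1 : Real.exp (3:ℝ) = Real.exp 1 ^ (3:ℕ) := by
    rw [Real.exp_one_pow]; norm_num
  have h2 : Real.exp 1 ^ 3 ≤ (2.7182818286:ℝ) ^ 3 :=
    pow_le_pow_left₀ (Real.exp_pos 1).le Real.exp_one_lt_d9.le 3
  have h3 : (2.7182818286:ℝ) ^ 3 ≤ 25 := by norm_num
  nlinarith [Real.exp_pos (3/2 : ℝ)]

/-- Core alternation argument: a polynomial of degree ≤ n bounded by M on [-1,1]
is bounded by M·Tₙ(y) at y > 1. One-sided version. -/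
lemma cheb_core (n : ℕ) (hn : 1 ≤ n) (q : ℝ[X]) (M : ℝ) (hM : 0 < M)
    (hdeg : q.natDegree ≤ n) (hq : ∀ x ∈ Icc (-1:ℝ) 1, |q.eval x| ≤ M)
    {y : ℝ} (hy : 1 < y) :
    q.eval y ≤ M * (Polynomial.Chebyshev.T ℝ n).eval y := by
  by_contra hcon
  push_neg at hcon
  set B := (Polynomial.Chebyshev.T ℝ n).eval y with hBdef
  have hB : 1 ≤ B := (T_bounds hy.le n).1
  have hB0 : 0 < B := by linarith
  set c := q.eval y / B with hc
  have hcB : c * B = q.eval y := div_mul_cancel₀ _ hB0.ne'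
  have hMc : M < c := (lt_div_iff₀ hB0).2 hcon
  set r : ℝ[X] := C c * Polynomial.Chebyshev.T ℝ n - q with hr
  set x : ℕ → ℝ := fun k => Real.cos (k * Real.pi / n) with hx
  have hnR : (0:ℝ) < (n:ℝ) := by exact_mod_cast hn
  have hpi := Real.pi_pos
  have hθ : ∀ k : ℕ, k ≤ n → (k * Real.pi / n) ∈ Icc 0 Real.pi := by
    intro k hk
    constructor
    · positivity
    · rw [div_le_iff₀ hnR]
      have : (k:ℝ) ≤ (n:ℝ) := by exact_mod_cast hk
      nlinarith
  have hx_T : ∀ k : ℕ, k ≤ n → (Polynomial.Chebyshev.T ℝ n).eval (x k) = (-1:ℝ) ^ k := by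
    intro k hk
    have h1 := Polynomial.Chebyshev.T_real_cos (k * Real.pi / n) n
    have h2 : ((n:ℤ):ℝ) * (k * Real.pi / n) = k * Real.pi := by
      push_cast
      field_simp
    rw [hx]
    simp only [h1, h2]
    have := Real.cos_nat_mul_pi_sub 0 k
    simpa using this
  have hx_mem : ∀ k : ℕ, x k ∈ Icc (-1:ℝ) 1 :=
    fun k => ⟨Real.neg_one_le_cos _, Real.cos_le_one _⟩
  have hx_anti : ∀ i j : ℕ, i < j → j ≤ n → x j < x i := by
    intro i j hij hj
    refine Real.strictAntiOn_cos (hθ i (le_trans hij.le hj)) (hθ j hj) ?_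
    rw [div_lt_div_iff₀ hnR hnR]
    have h1 : (i:ℝ) < (j:ℝ) := by exact_mod_cast hij
    nlinarith [mul_lt_mul_of_pos_right h1 (mul_pos hpi hnR)]
  have hx_mono : ∀ i j : ℕ, i ≤ j → j ≤ n → x j ≤ x i := by
    intro i j hij hj
    rcases eq_or_lt_of_le hij with h | h
    · rw [h]
    · exact (hx_anti i j h hj).le
  have hsign : ∀ k : ℕ, k ≤ n → 0 < (-1:ℝ) ^ k * r.eval (x k) := by
    intro k hk
    have hev : r.eval (x k) = c * (-1:ℝ) ^ k - q.eval (x k) := by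
      simp [hr, hx_T k hk]
    have hsq : ((-1:ℝ) ^ k) * ((-1:ℝ) ^ k) = 1 := by
      rw [← pow_add]
      exact Even.neg_one_pow ⟨k, by ring⟩
    have habs : (-1:ℝ) ^ k * q.eval (x k) ≤ M := by
      calc (-1:ℝ) ^ k * q.eval (x k) ≤ |(-1:ℝ) ^ k * q.eval (x k)| := le_abs_self _
        _ = |q.eval (x k)| := by rw [abs_mul, abs_pow, abs_neg, abs_one, one_pow, one_mul]
        _ ≤ M := hq _ (hx_mem k)
    rw [hev]
    have : (-1:ℝ) ^ k * (c * (-1:ℝ) ^ k - q.eval (x k))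
        = c - (-1:ℝ) ^ k * q.eval (x k) := by
      linear_combination c * hsq
    rw [this]
    linarith
  have hcont : Continuous fun t : ℝ => r.eval t := r.continuous
  have hroot : ∀ k : ℕ, k < n → ∃ z, z ∈ Ioo (x (k+1)) (x k) ∧ r.eval z = 0 := by
    intro k hk
    have hab : x (k+1) < x k := hx_anti k (k+1) (Nat.lt_succ_self k) hk
    have h1 := hsign k hk.le
    have h2 := hsign (k+1) hk
    rcases Nat.even_or_odd k with he | ho
    · have e1 : (-1:ℝ) ^ k = 1 := he.neg_one_pow
      have e2 : (-1:ℝ) ^ (k+1) = -1 := by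
        rw [pow_succ, e1]; ring
      rw [e1, one_mul] at h1
      rw [e2] at h2
      have h2' : r.eval (x (k+1)) < 0 := by linarith
      have := intermediate_value_Ioo hab.le hcont.continuousOn
        (a := x (k+1)) (b := x k)
      obtain ⟨z, hz, hz0⟩ := this ⟨h2', h1⟩
      exact ⟨z, hz, hz0⟩
    · have e1 : (-1:ℝ) ^ k = -1 := ho.neg_one_pow
      have e2 : (-1:ℝ) ^ (k+1) = 1 := by
        rw [pow_succ, e1]; ring
      rw [e1] at h1
      rw [e2, one_mul] at h2
      have h1' : r.eval (x k) < 0 := by linarith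
      have := intermediate_value_Ioo' hab.le hcont.continuousOn
        (a := x (k+1)) (b := x k)
      obtain ⟨z, hz, hz0⟩ := this ⟨h1', h2⟩
      exact ⟨z, hz, hz0⟩
  choose! z hzmem hzval using hroot
  have hzlt : ∀ k : ℕ, k < n → z k < x k := fun k hk => (hzmem k hk).2
  have hzgt : ∀ k : ℕ, k < n → x (k+1) < z k := fun k hk => (hzmem k hk).1
  have hzdec : ∀ i j : ℕ, i < j → j < n → z j < z i := by
    intro i j hij hj
    have h1 : z j < x j := hzlt j hj
    have h2 : x j ≤ x (i+1) := hx_mono (i+1) j hij hj.le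
    have h3 : x (i+1) < z i := hzgt i (lt_trans hij hj)
    linarith
  have hz1 : ∀ k : ℕ, k < n → z k < 1 := by
    intro k hk
    have := hzlt k hk
    have := (hx_mem k).2
    linarith
  set S : Finset ℝ := insert y ((Finset.range n).image z) with hS
  have hynotmem : y ∉ (Finset.range n).image z := by
    simp only [Finset.mem_image, Finset.mem_range]
    rintro ⟨k, hk, rfl⟩
    exact absurd (hz1 k hk) (by linarith)
  have hinj : Set.InjOn z (Finset.range n) := by
    intro i hi j hj hij
    simp only [Finset.coe_range, Set.mem_Iio] at hi hj
    by_contra hne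
    rcases Nat.lt_or_ge i j with h | h
    · exact absurd hij (hzdec i j h hj).ne'
    · rcases Nat.lt_or_ge j i with h' | h'
      · exact absurd hij (hzdec j i h' hi).ne
      · omega
  have hcard : S.card = n + 1 := by
    rw [hS, Finset.card_insert_of_notMem hynotmem,
      Finset.card_image_of_injOn hinj, Finset.card_range]
  have heval : ∀ w ∈ S, r.eval w = 0 := by
    intro w hw
    rw [hS, Finset.mem_insert] at hw
    rcases hw with rfl | hw
    · simp [hr, ← hBdef, hcB]
    · simp only [Finset.mem_image, Finset.mem_range] at hw
      obtain ⟨k, hk, rfl⟩ := hw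
      exact hzval k hk
  have hdeg_r : r.natDegree ≤ n := by
    refine le_trans (natDegree_sub_le _ _) (max_le ?_ hdeg)
    exact le_trans (natDegree_C_mul_le _ _) (natDegree_T_le n)
  have hr0 : r = 0 := by
    refine Polynomial.eq_zero_of_natDegree_lt_card_of_eval_eq_zero' r S heval ?_
    rw [hcard]
    omega
  have := hsign 0 (Nat.zero_le n)
  rw [hr0] at this
  simp at this

lemma cheb_growth (n : ℕ) (q : ℝ[X]) (M : ℝ) (hM : 0 < M)
    (hdeg : q.natDegree ≤ n) (hq : ∀ x ∈ Icc (-1:ℝ) 1, |q.eval x| ≤ M)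
    {y : ℝ} (hy : 1 ≤ y) :
    |q.eval y| ≤ M * (y + Real.sqrt (y ^ 2 - 1)) ^ n := by
  have hTb := T_bounds hy n
  have key : |q.eval y| ≤ M * (Polynomial.Chebyshev.T ℝ n).eval y := by
    rcases Nat.eq_zero_or_pos n with rfl | hn
    · have hq0 : q = C (q.coeff 0) := Polynomial.eq_C_of_natDegree_le_zero hdeg
      have h1 : q.eval y = q.eval 1 := by rw [hq0]; simp
      have := hq 1 ⟨by norm_num, le_refl 1⟩
      rw [h1]
      calc |q.eval 1| ≤ M := this
        _ ≤ M * (Polynomial.Chebyshev.T ℝ (0:ℕ)).eval y := by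
            nlinarith [(T_bounds hy 0).1]
    · rcases eq_or_lt_of_le hy with heq | hy'
      · have := hq y ⟨by rw [← heq]; norm_num, heq.ge⟩
        nlinarith [hTb.1]
      · have h1 := cheb_core n hn q M hM hdeg hq hy'
        have h2 := cheb_core n hn (-q) M hM (by simpa using hdeg)
          (fun x hx => by simpa using hq x hx) hy'
        simp only [eval_neg] at h2
        rw [abs_le]
        constructor <;> nlinarith
  calc |q.eval y| ≤ M * (Polynomial.Chebyshev.T ℝ n).eval y := key
    _ ≤ M * (y + Real.sqrt (y ^ 2 - 1)) ^ n := by nlinarith [hTb.2]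

end ExpPolyAux


set_option maxHeartbeats 2000000 in
open ExpPolyAux Real in
/-- Any polynomial `δ`-approximating `e^{-x}` on `[0, b]` with `b ≥ 5` and `δ ≤ 1/8`
must have degree at least `√b / 3`. -/
theorem exp_poly_approx_degree_lower_bound (b : ℝ) (hb : 5 ≤ b) (δ : ℝ)
    (hδ : δ ∈ Set.Ioc (0 : ℝ) (1 / 8)) (p : Polynomial ℝ)
    (happrox : ∀ x ∈ Set.Icc (0 : ℝ) b, |Real.exp (-x) - p.eval x| ≤ δ) :
    (1 / 3 : ℝ) * Real.sqrt b ≤ (p.natDegree : ℝ) := by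
  obtain ⟨hδ0, hδ8⟩ := hδ
  set n := p.natDegree with hn
  set α : ℝ := (3 - b) / 2 with hα
  set β : ℝ := (b + 3) / 2 with hβ
  set r : ℝ[X] := p.comp (C α * X + C β) with hrdef
  have hrdeg : r.natDegree ≤ n := by
    refine le_trans natDegree_comp_le ?_
    have h1 : (C α * X + C β).natDegree ≤ 1 := by
      refine le_trans (natDegree_add_le _ _) (max_le ?_ (by simp))
      exact le_trans natDegree_mul_le (by simp)
    calc p.natDegree * (C α * X + C β).natDegree ≤ n * 1 :=
        Nat.mul_le_mul_left _ h1
      _ = n := Nat.mul_one n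
  have hreval : ∀ t : ℝ, r.eval t = p.eval (α * t + β) := by
    intro t; simp [hrdef, eval_comp]
  set M : ℝ := Real.exp (-3) + δ with hM
  have hMpos : 0 < M := by positivity
  have hbound : ∀ t ∈ Icc (-1:ℝ) 1, |r.eval t| ≤ M := by
    intro t ht
    obtain ⟨ht1, ht2⟩ := ht
    rw [hreval]
    set w := α * t + β with hw
    have hw3 : 3 ≤ w := by rw [hw, hα, hβ]; nlinarith
    have hwb : w ≤ b := by rw [hw, hα, hβ]; nlinarith
    have happ := happrox w ⟨by linarith, hwb⟩
    have hexpw : Real.exp (-w) ≤ Real.exp (-3) := Real.exp_le_exp.2 (by linarith)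
    have hexpw0 : 0 < Real.exp (-w) := Real.exp_pos _
    calc |p.eval w| = |Real.exp (-w) - (Real.exp (-w) - p.eval w)| := by ring_nf
      _ ≤ |Real.exp (-w)| + |Real.exp (-w) - p.eval w| := abs_sub _ _
      _ ≤ Real.exp (-3) + δ := by
          rw [abs_of_pos hexpw0]
          exact add_le_add hexpw happ
  set Y : ℝ := (b + 3) / (b - 3) with hY
  have hb3 : (0:ℝ) < b - 3 := by linarith
  have hY1 : 1 < Y := by
    rw [hY, lt_div_iff₀ hb3]; linarith
  have hgrow := cheb_growth n r M hMpos hrdeg hbound hY1.le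
  have hrY : r.eval Y = p.eval 0 := by
    rw [hreval]
    congr 1
    rw [hα, hβ, hY]
    field_simp
    ring
  have hp0 : 7/8 ≤ p.eval 0 := by
    have h0 := happrox 0 ⟨le_refl 0, by linarith⟩
    rw [neg_zero, Real.exp_zero] at h0
    have := abs_le.1 h0
    linarith [this.2]
  set u : ℝ := Y + Real.sqrt (Y ^ 2 - 1) with hu
  have hkey : 7/8 ≤ M * u ^ n := by
    rw [hrY] at hgrow
    calc (7:ℝ)/8 ≤ p.eval 0 := hp0
      _ ≤ |p.eval 0| := le_abs_self _
      _ ≤ M * u ^ n := hgrow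
  have hexp3 : Real.exp (-3:ℝ) ≤ 1/20 := exp_neg_three_le
  have hun_pos : (0:ℝ) < u ^ n := by
    have hu0' : (0:ℝ) < u := by
      have := Real.sqrt_nonneg (Y ^ 2 - 1)
      rw [hu]; linarith
    positivity
  have hM40 : M ≤ 7/40 := by rw [hM]; linarith
  have hK : (5:ℝ) ≤ u ^ n := by
    have h1 : M * u ^ n ≤ (7/40) * u ^ n := mul_le_mul_of_nonneg_right hM40 hun_pos.le
    linarith
  -- closed form for u
  set s : ℝ := Real.sqrt b with hs
  have hs2 : s ^ 2 = b := Real.sq_sqrt (by linarith)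
  have hs0 : 0 ≤ s := Real.sqrt_nonneg b
  set c3 : ℝ := Real.sqrt 3 with hc3
  have hc3sq : c3 ^ 2 = 3 := Real.sq_sqrt (by norm_num)
  have hc3pos : 0 < c3 := Real.sqrt_pos.2 (by norm_num)
  have hc3lb : (1.73:ℝ) ≤ c3 := sqrt3_lb
  have hc3ub : c3 ≤ (1.74:ℝ) := sqrt3_ub
  have hs5 : (2.23:ℝ) ≤ s := num_le_sqrt (by norm_num; linarith) (by norm_num)
  have hcs : c3 < s := by linarith
  have hY2 : Y ^ 2 - 1 = 12 * b / (b - 3) ^ 2 := by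
    rw [hY]; field_simp; ring
  have hsq2 : (2 * c3 * s / (b - 3)) ^ 2 = 12 * b / (b - 3) ^ 2 := by
    rw [div_pow]
    congr 1
    linear_combination (4 * s ^ 2) * hc3sq + 12 * hs2
  have hsqrtY : Real.sqrt (Y ^ 2 - 1) = 2 * c3 * s / (b - 3) := by
    rw [hY2, ← hsq2, Real.sqrt_sq (by positivity)]
  have huform : u = (s + c3) / (s - c3) := by
    rw [hu, hsqrtY, hY, ← add_div, div_eq_div_iff (by linarith) (by linarith)]
    linear_combination (-2*s) * hc3sq + (2*c3) * hs2
  have hu1 : 1 < u := by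
    rw [huform, lt_div_iff₀ (by linarith)]; linarith
  have hu0 : 0 < u := lt_trans one_pos hu1
  rcases lt_or_ge b 9 with h9 | h9
  · have hs3 : s < 3 := sqrt_lt_num (by linarith) (by norm_num; linarith) (by norm_num)
    have hn1 : 1 ≤ n := by
      by_contra h
      push_neg at h
      have : n = 0 := by omega
      rw [this, pow_zero] at hK
      linarith
    have : (1:ℝ) ≤ (n:ℝ) := by exact_mod_cast hn1
    linarith
  rcases lt_or_ge b 36 with h36 | h36
  · have hs3 : (3:ℝ) ≤ s := num_le_sqrt (by norm_num; linarith) (by norm_num)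
    have hs6 : s < 6 := sqrt_lt_num (by linarith) (by norm_num; linarith) (by norm_num)
    have hn2 : 2 ≤ n := by
      by_contra h
      push_neg at h
      have hun : u ^ n ≤ u := by
        calc u ^ n ≤ u ^ 1 := pow_le_pow_right₀ hu1.le (by omega)
          _ = u := pow_one u
      have h5u : 5 ≤ u := le_trans hK hun
      rw [huform, le_div_iff₀ (by linarith)] at h5u
      linarith
    have : (2:ℝ) ≤ (n:ℝ) := by exact_mod_cast hn2
    linarith
  rcases lt_or_ge b 81 with h81 | h81
  · have hs6 : (6:ℝ) ≤ s := num_le_sqrt (by norm_num; linarith) (by norm_num)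
    have hs9 : s < 9 := sqrt_lt_num (by linarith) (by norm_num; linarith) (by norm_num)
    have hn3 : 3 ≤ n := by
      by_contra h
      push_neg at h
      have hun : u ^ n ≤ u ^ 2 := pow_le_pow_right₀ hu1.le (by omega)
      have h5u : 5 ≤ u ^ 2 := le_trans hK hun
      have humax : u ≤ (6 + c3) / (6 - c3) := by
        rw [huform, div_le_div_iff₀ (by linarith) (by linarith)]
        have he : (6 + c3) * (s - c3) - (s + c3) * (6 - c3) = 2 * c3 * (s - 6) := by ring
        have h2 : 0 ≤ 2 * c3 * (s - 6) := mul_nonneg (by linarith) (by linarith)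
        linarith
      have hsq : u ^ 2 ≤ ((6 + c3) / (6 - c3)) ^ 2 := pow_le_pow_left₀ hu0.le humax 2
      have hlt : ((6 + c3) / (6 - c3)) ^ 2 < 5 := by
        rw [div_pow, div_lt_iff₀ (pow_pos (by linarith) 2)]
        have he : 5 * (6 - c3) ^ 2 - (6 + c3) ^ 2 = 144 - 72 * c3 + 4 * c3 ^ 2 := by ring
        have h2 : 4 * c3 ^ 2 = 12 := by linear_combination 4 * hc3sq
        linarith
      exact absurd (lt_of_le_of_lt (le_trans h5u hsq) hlt) (lt_irrefl 5)
    have : (3:ℝ) ≤ (n:ℝ) := by exact_mod_cast hn3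
    linarith
  · have hs9 : (9:ℝ) ≤ s := num_le_sqrt (by norm_num; linarith) (by norm_num)
    obtain ⟨w, hw⟩ : ∃ w : ℝ, w = 2 * c3 / (s - c3) := ⟨_, rfl⟩
    have hw0 : 0 < w := by rw [hw]; exact div_pos (by linarith) (by linarith)
    have huw : u = 1 + w := by
      have hne : s - c3 ≠ 0 := sub_ne_zero.2 hcs.ne'
      rw [huform, hw]
      field_simp [hne]
      ring
    have h1 : u ^ ((1/3:ℝ) * s) ≤ Real.exp (w * ((1/3) * s)) := by
      have h2 : u ≤ Real.exp w := by
        rw [huw]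
        linarith [Real.add_one_le_exp w]
      calc u ^ ((1/3:ℝ) * s) ≤ (Real.exp w) ^ ((1/3:ℝ) * s) :=
            Real.rpow_le_rpow hu0.le h2 (by positivity)
        _ = Real.exp (w * ((1/3) * s)) := by rw [← Real.exp_mul]
    have h3 : w * ((1/3:ℝ) * s) ≤ 3/2 := by
      rw [hw, div_mul_eq_mul_div, div_le_iff₀ (by linarith)]
      have h2 : 0 ≤ (1.74 - c3) * s := mul_nonneg (by linarith) (by linarith)
      have h3 : (1.74 - c3) * s = 1.74 * s - c3 * s := by ring
      linarith [h2, h3]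
    have h4 : u ^ ((1/3:ℝ) * s) ≤ 5 :=
      le_trans h1 (le_trans (Real.exp_le_exp.2 h3) exp_three_half_le)
    have h5 : u ^ ((1/3:ℝ) * s) ≤ u ^ ((n:ℝ)) := by
      rw [Real.rpow_natCast]
      exact le_trans h4 hK
    exact (Real.rpow_le_rpow_left_iff hu1).1 h5
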